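/- arXiv:0811.2117 — 2 statements merged into one kernel-verified Lean document; each statement's English description precedes it below -/
import Mathlib

section
/- If a disjunctive database D contains a disjunction a, and D' is a disjunctive database containing a disjunction a' that subsumes a (i.e., the fact set of a' is a proper subset of that of a) but D contains neither a' nor any disjunction subsuming a', then D and D' have different sets of minimal models. -/
variable {F : Type*} [DecidableEq F]

/-- M is a model of the disjunctive database D: it meets every disjunction. -/
def IsModel (D : Finset (Finset F)) (M : Finset F) : Prop :=
  ∀ d ∈ D, ∃ t ∈ d, t ∈ M

/-- M is a minimal model of D. -/
def IsMinModel (D : Finset (Finset F)) (M : Finset F) : Prop :=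
  IsModel D M ∧ ∀ M' ⊂ M, ¬ IsModel D M'

/-- reduction removes every disjunction properly containing another disjunction of D. -/
def reduction (D : Finset (Finset F)) : Finset (Finset F) :=
  D.filter (fun d => ∀ d' ∈ D, ¬ d' ⊂ d)

lemma exists_min_model (D : Finset (Finset F)) (M : Finset F) (hM : IsModel D M) :
    ∃ N ⊆ M, IsMinModel D N := by
  induction M using Finset.strongInduction with
  | _ M ih =>
    by_cases h : ∀ M' ⊂ M, ¬ IsModel D M'
    · exact ⟨M, le_refl _, hM, h⟩
    · push_neg at h
      obtain ⟨M', hM', hmod⟩ := h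
      obtain ⟨N, hN, hmin⟩ := ih M' hM' hmod
      exact ⟨N, hN.trans hM'.subset, hmin⟩

theorem stmt4 [Fintype F] (D D' : Finset (Finset F))
    (hD : ∀ d ∈ D, d.Nonempty) (hD' : ∀ d ∈ D', d.Nonempty)
    (a a' : Finset F) (ha : a ∈ D) (ha' : a' ∈ D')
    (hsub : a' ⊂ a)
    (h1 : a' ∉ D) (h2 : ∀ d ∈ D, ¬ d ⊂ a') :
    ¬ (∀ M : Finset F, IsMinModel D M ↔ IsMinModel D' M) := by
  intro heq
  have hmod : IsModel D (Finset.univ \ a') := by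
    intro d hd
    have hne : ¬ d ⊆ a' := by
      intro hsub'
      rcases hsub'.ssubset_or_eq with h | h
      · exact h2 d hd h
      · exact h1 (h ▸ hd)
    obtain ⟨t, ht, ht'⟩ := Finset.not_subset.mp hne
    exact ⟨t, ht, Finset.mem_sdiff.mpr ⟨Finset.mem_univ t, ht'⟩⟩
  obtain ⟨N, hN, hmin⟩ := exists_min_model D _ hmod
  have : IsMinModel D' N := (heq N).mp hmin
  obtain ⟨t, ht, htN⟩ := this.1 a' ha'
  have := Finset.mem_sdiff.mp (hN htN)
  exact this.2 ht
end

section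
/- For the conflict graph on facts {t_{i1}, t_{i2}, t_{i3} : 1 ≤ i ≤ n} with edges {t_{i1}, t_{j1}} (i ≠ j), {t_{i1}, t_{i2}}, {t_{i2}, t_{i3}}, the disjunctive database D = { t_{i2} ∨ t_{i3} : 1 ≤ i ≤ n } ∪ { t_{i1} ∨ t_{i2} ∨ ⋁_{z ≠ i} t_z : 1 ≤ i ≤ n, t_z ∈ {t_{z1}, t_{z3}} } has as its minimal models exactly the maximal conflict-free subsets (repairs). -/
variable {F : Type*} [DecidableEq F]

/-- S is conflict-free w.r.t. a binary conflict relation G. -/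
def ConflictFree (G : F → F → Prop) (S : Finset F) : Prop :=
  ∀ a ∈ S, ∀ b ∈ S, ¬ G a b

/-- S is a repair of V w.r.t. conflict relation G: a maximal conflict-free subset of V. -/
def IsRepairC (V : Finset F) (G : F → F → Prop) (S : Finset F) : Prop :=
  S ⊆ V ∧ ConflictFree G S ∧ ∀ S', S ⊂ S' → S' ⊆ V → ¬ ConflictFree G S'

/-- Conflict relation of the family D_n: facts are (i,k) with k=0,1,2 encoding
    t_{i1}, t_{i2}, t_{i3}. Edges: {t_{i1},t_{j1}} for i≠j, {t_{i1},t_{i2}}, {t_{i2},t_{i3}}. -/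
def ConfDn (n : ℕ) (a b : Fin n × Fin 3) : Prop :=
  (a.2 = 0 ∧ b.2 = 0 ∧ a.1 ≠ b.1) ∨
  (a.1 = b.1 ∧ ((a.2 = 0 ∧ b.2 = 1) ∨ (a.2 = 1 ∧ b.2 = 0) ∨
                (a.2 = 1 ∧ b.2 = 2) ∨ (a.2 = 2 ∧ b.2 = 1)))

/-- The repair {t_{12},...,t_{n2}}. -/
def repA (n : ℕ) : Finset (Fin n × Fin 3) :=
  Finset.univ.image (fun i => (i, (1 : Fin 3)))

/-- The repair {t_{i1}, t_{i3}} ∪ { (j, f j) : j ≠ i } (for f choosing among t_{j2}, t_{j3}). -/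
def repB (n : ℕ) (i : Fin n) (f : Fin n → Fin 3) : Finset (Fin n × Fin 3) :=
  insert (i, (0 : Fin 3)) (insert (i, (2 : Fin 3))
    ((Finset.univ.erase i).image (fun j => (j, f j))))

/-- The disjunctions t_{i2} ∨ t_{i3}. -/
def DnD1 (n : ℕ) : Finset (Finset (Fin n × Fin 3)) :=
  Finset.univ.image (fun i : Fin n => ({(i, (1 : Fin 3)), (i, (2 : Fin 3))} : Finset (Fin n × Fin 3)))

/-- The disjunctions t_{i1} ∨ t_{i2} ∨ ⋁_{z ≠ i} t_z with t_z ∈ {t_{z1}, t_{z3}}. -/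
def DnD2 (n : ℕ) : Finset (Finset (Fin n × Fin 3)) :=
  Finset.univ.image (fun p : Fin n × (Fin n → Bool) =>
    insert (p.1, (0 : Fin 3)) (insert (p.1, (1 : Fin 3))
      ((Finset.univ.erase p.1).image
        (fun z => (z, if p.2 z then (0 : Fin 3) else (2 : Fin 3))))))

/-- The disjunctions t_1 ∨ ... ∨ t_n with t_i ∈ {t_{i1}, t_{i3}}. -/
def DnD3 (n : ℕ) : Finset (Finset (Fin n × Fin 3)) :=
  Finset.univ.image (fun g : Fin n → Bool =>
    Finset.univ.image (fun i : Fin n => (i, if g i then (0 : Fin 3) else (2 : Fin 3))))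

open Finset

section Proof
variable {n : ℕ}

/- ## conflict facts -/
lemma conf2_left {i : Fin n} {b : Fin n × Fin 3} (h : ConfDn n (i,2) b) : b = (i,1) := by
  simp only [ConfDn] at h; rw [Prod.ext_iff]
  obtain ⟨h1,-⟩|⟨h1,h2⟩ := h
  · simp at h1
  · simp only at h1 h2 ⊢
    refine ⟨h1.symm, ?_⟩
    rcases h2 with ⟨x,y⟩|⟨x,y⟩|⟨x,y⟩|⟨x,y⟩ <;> simp_all

lemma conf2_right {i : Fin n} {b : Fin n × Fin 3} (h : ConfDn n b (i,2)) : b = (i,1) := by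
  simp only [ConfDn] at h; rw [Prod.ext_iff]
  obtain ⟨-,h1,-⟩|⟨h1,h2⟩ := h
  · simp at h1
  · simp only at h1 h2 ⊢
    refine ⟨h1, ?_⟩
    rcases h2 with ⟨x,y⟩|⟨x,y⟩|⟨x,y⟩|⟨x,y⟩ <;> simp_all

lemma conf0_left {i : Fin n} {b : Fin n × Fin 3} (h : ConfDn n (i,0) b) :
    b = (i,1) ∨ (b.2 = 0 ∧ b.1 ≠ i) := by
  simp only [ConfDn] at h
  obtain ⟨-,h1,h2⟩|⟨h1,h2⟩ := h
  · exact Or.inr ⟨h1, fun hh => h2 (by simp [hh])⟩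
  · left
    rw [Prod.ext_iff]
    simp only at h1 h2 ⊢
    refine ⟨h1.symm, ?_⟩
    rcases h2 with ⟨x,y⟩|⟨x,y⟩|⟨x,y⟩|⟨x,y⟩ <;> simp_all

lemma conf0_right {i : Fin n} {b : Fin n × Fin 3} (h : ConfDn n b (i,0)) :
    b = (i,1) ∨ (b.2 = 0 ∧ b.1 ≠ i) := by
  simp only [ConfDn] at h
  obtain ⟨h1,-,h2⟩|⟨h1,h2⟩ := h
  · exact Or.inr ⟨h1, fun hh => h2 (by simp [hh])⟩
  · left
    rw [Prod.ext_iff]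
    simp only at h1 h2 ⊢
    refine ⟨h1, ?_⟩
    rcases h2 with ⟨x,y⟩|⟨x,y⟩|⟨x,y⟩|⟨x,y⟩ <;> simp_all

lemma conf_00 {i j : Fin n} (h : i ≠ j) : ConfDn n (i,0) (j,0) := Or.inl ⟨rfl, rfl, h⟩
lemma conf_01 (i : Fin n) : ConfDn n (i,0) (i,1) := Or.inr ⟨rfl, Or.inl ⟨rfl,rfl⟩⟩
lemma conf_10 (i : Fin n) : ConfDn n (i,1) (i,0) := Or.inr ⟨rfl, Or.inr (Or.inl ⟨rfl,rfl⟩)⟩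
lemma conf_12 (i : Fin n) : ConfDn n (i,1) (i,2) := Or.inr ⟨rfl, Or.inr (Or.inr (Or.inl ⟨rfl,rfl⟩))⟩
lemma conf_21 (i : Fin n) : ConfDn n (i,2) (i,1) := Or.inr ⟨rfl, Or.inr (Or.inr (Or.inr ⟨rfl,rfl⟩))⟩

/- ## membership lemmas -/
lemma mem_repA {x : Fin n × Fin 3} : x ∈ repA n ↔ x.2 = 1 := by
  simp only [repA, mem_image, mem_univ, true_and]
  constructor
  · rintro ⟨i, rfl⟩; rfl
  · intro h; exact ⟨x.1, by rw [Prod.ext_iff]; exact ⟨rfl, h.symm⟩⟩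

lemma mem_repB {i : Fin n} {f : Fin n → Fin 3} {x : Fin n × Fin 3} :
    x ∈ repB n i f ↔ x = (i,0) ∨ x = (i,2) ∨ (x.1 ≠ i ∧ x = (x.1, f x.1)) := by
  simp only [repB, mem_insert, mem_image, mem_erase, mem_univ, and_true]
  constructor
  · rintro (rfl|rfl|⟨j,hj,rfl⟩)
    · exact Or.inl rfl
    · exact Or.inr (Or.inl rfl)
    · exact Or.inr (Or.inr ⟨hj, rfl⟩)
  · rintro (rfl|rfl|⟨hx, hh⟩)
    · exact Or.inl rfl
    · exact Or.inr (Or.inl rfl)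
    · exact Or.inr (Or.inr ⟨x.1, hx, hh.symm⟩)

lemma d1_mem (i : Fin n) :
    ({(i, (1:Fin 3)), (i, (2:Fin 3))} : Finset (Fin n × Fin 3)) ∈ DnD1 n ∪ DnD2 n := by
  refine mem_union_left _ ?_
  simp only [DnD1, mem_image, mem_univ, true_and]
  exact ⟨i, rfl⟩

def d2set (n : ℕ) (i : Fin n) (b : Fin n → Bool) : Finset (Fin n × Fin 3) :=
  insert (i, (0:Fin 3)) (insert (i, (1:Fin 3))
    ((Finset.univ.erase i).image (fun z => (z, if b z then (0:Fin 3) else (2:Fin 3)))))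

lemma d2_mem (i : Fin n) (b : Fin n → Bool) : d2set n i b ∈ DnD1 n ∪ DnD2 n := by
  refine mem_union_right _ ?_
  simp only [DnD2, mem_image, mem_univ, true_and]
  exact ⟨(i, b), rfl⟩

/- from a model: D1 consequences -/
lemma model_d1 {M : Finset (Fin n × Fin 3)} (hM : IsModel (DnD1 n ∪ DnD2 n) M) (i : Fin n) :
    (i,(1:Fin 3)) ∈ M ∨ (i,(2:Fin 3)) ∈ M := by
  obtain ⟨t, ht, htM⟩ := hM _ (d1_mem i)
  rcases mem_insert.1 ht with rfl | ht
  · exact Or.inl htM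
  · rw [mem_singleton] at ht; subst ht; exact Or.inr htM

lemma model_d2 {M : Finset (Fin n × Fin 3)} (hM : IsModel (DnD1 n ∪ DnD2 n) M)
    (i : Fin n) (b : Fin n → Bool) :
    (i,(0:Fin 3)) ∈ M ∨ (i,(1:Fin 3)) ∈ M ∨
      ∃ z, z ≠ i ∧ (z, if b z then (0:Fin 3) else 2) ∈ M := by
  obtain ⟨t, ht, htM⟩ := hM _ (d2_mem i b)
  simp only [d2set, mem_insert, mem_image, mem_erase, mem_univ, and_true] at ht
  rcases ht with rfl | rfl | ⟨z, hz, rfl⟩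
  · exact Or.inl htM
  · exact Or.inr (Or.inl htM)
  · exact Or.inr (Or.inr ⟨z, hz, htM⟩)

end Proof
section Proof2
variable {n : ℕ}
open Finset

lemma pat_elim {a b : Fin 3}
    (h : (a=0∧b=1)∨(a=1∧b=0)∨(a=1∧b=2)∨(a=2∧b=1)) : (a = 1 ∨ b = 1) ∧ a ≠ b := by omega

lemma conf_irrefl (a : Fin n × Fin 3) : ¬ ConfDn n a a := by
  rintro (⟨-,-,h⟩|⟨-,h⟩)
  · exact h rfl
  · exact (pat_elim h).2 rfl

lemma cf_insert {F : Type*} [DecidableEq F] {G : F → F → Prop} {M : Finset F} {x : F}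
    (hM : ConflictFree G M) (h1 : ∀ b ∈ M, ¬ G x b) (h2 : ∀ b ∈ M, ¬ G b x) (h3 : ¬ G x x) :
    ConflictFree G (insert x M) := by
  intro a ha b hb
  rcases mem_insert.1 ha with rfl|ha'
  · rcases mem_insert.1 hb with rfl|hb'
    · exact h3
    · exact h1 _ hb'
  · rcases mem_insert.1 hb with rfl|hb'
    · exact h2 _ ha'
    · exact hM _ ha' _ hb'

lemma repA_repair : IsRepairC Finset.univ (ConfDn n) (repA n) := by
  refine ⟨subset_univ _, ?_, ?_⟩
  · intro a ha b hb hab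
    rw [mem_repA] at ha hb
    rcases hab with ⟨h,-⟩|⟨-,h⟩
    · rw [ha] at h; simp at h
    · have := (pat_elim h).2; rw [ha, hb] at this; exact this rfl
  · intro S' hsub _ hcf
    obtain ⟨x, hxS, hxA⟩ := exists_of_ssubset hsub
    have h1 : (x.1, (1:Fin 3)) ∈ S' := hsub.1 (mem_repA.2 rfl)
    rw [mem_repA] at hxA
    have hx : x = (x.1, x.2) := rfl
    have : x.2 = 0 ∨ x.2 = 2 := by omega
    rcases this with h|h
    · exact hcf _ hxS _ h1 (by rw [hx, h]; exact conf_01 x.1)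
    · exact hcf _ hxS _ h1 (by rw [hx, h]; exact conf_21 x.1)

lemma repB_repair {i : Fin n} {f : Fin n → Fin 3} (hf : ∀ j, j ≠ i → f j = 1 ∨ f j = 2) :
    IsRepairC Finset.univ (ConfDn n) (repB n i f) := by
  have hmem : ∀ x ∈ repB n i f,
      (x.1 = i ∧ (x.2 = 0 ∨ x.2 = 2)) ∨ (x.1 ≠ i ∧ x.2 = f x.1 ∧ (x.2 = 1 ∨ x.2 = 2)) := by
    intro x hx
    rcases mem_repB.1 hx with rfl|rfl|⟨h1,h2⟩
    · exact Or.inl ⟨rfl, Or.inl rfl⟩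
    · exact Or.inl ⟨rfl, Or.inr rfl⟩
    · have : x.2 = f x.1 := by rw [h2]
      rcases hf _ h1 with h|h
      · exact Or.inr ⟨h1, this, Or.inl (this.trans h)⟩
      · exact Or.inr ⟨h1, this, Or.inr (this.trans h)⟩
  refine ⟨subset_univ _, ?_, ?_⟩
  · intro a ha b hb hab
    have Ha := hmem a ha
    have Hb := hmem b hb
    rcases hab with ⟨ha0, hb0, hne⟩|⟨heq, hpat⟩
    · -- both second components 0: both must equal (i,0)
      have hai : a.1 = i := by rcases Ha with ⟨h,-⟩|⟨-,-,h⟩; exact h; omega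
      have hbi : b.1 = i := by rcases Hb with ⟨h,-⟩|⟨-,-,h⟩; exact h; omega
      exact hne (hai.trans hbi.symm)
    · obtain ⟨hone, hdiff⟩ := pat_elim hpat
      rcases Ha with ⟨ha1, ha2⟩|⟨ha1, ha2, ha3⟩ <;> rcases Hb with ⟨hb1, hb2⟩|⟨hb1, hb2, hb3⟩
      · omega
      · exact hb1 (heq ▸ ha1)
      · exact ha1 (heq.symm ▸ hb1)
      · exact hdiff (by rw [ha2, hb2, heq])
  · intro S' hsub _ hcf
    obtain ⟨x, hxS, hxB⟩ := exists_of_ssubset hsub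
    have hi0 : (i, (0:Fin 3)) ∈ S' := hsub.1 (mem_repB.2 (Or.inl rfl))
    have hi2 : (i, (2:Fin 3)) ∈ S' := hsub.1 (mem_repB.2 (Or.inr (Or.inl rfl)))
    have hjf : ∀ j, j ≠ i → (j, f j) ∈ S' := fun j hj =>
      hsub.1 (mem_repB.2 (Or.inr (Or.inr ⟨hj, rfl⟩)))
    have hx : x = (x.1, x.2) := rfl
    rw [mem_repB] at hxB
    push_neg at hxB
    obtain ⟨hne0, hne2, hne3⟩ := hxB
    by_cases hxi : x.1 = i
    · -- then x.2 = 1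
      have hx2 : x.2 = 1 := by
        by_contra hh
        rcases show x.2 = 0 ∨ x.2 = 2 by omega with h|h
        · exact hne0 (Prod.ext hxi h)
        · exact hne2 (Prod.ext hxi h)
      have hxeq : x = (i, 1) := Prod.ext hxi hx2
      exact hcf _ hi0 _ hxS (hxeq ▸ conf_01 i)
    · have hne : x ≠ (x.1, f x.1) := fun h => (hne3 hxi) h
      have hfx : x.2 ≠ f x.1 := fun h => hne (by rw [hx, h])
      rcases show x.2 = 0 ∨ x.2 = 1 ∨ x.2 = 2 by omega with h|h|h
      · have hxeq : x = (x.1, 0) := Prod.ext rfl h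
        exact hcf _ hi0 _ hxS (hxeq ▸ conf_00 (Ne.symm hxi))
      · have hf2 : f x.1 = 2 := by rcases hf _ hxi with hh|hh; · rw [h] at hfx; omega
                                   · exact hh
        have hfm : (x.1, (2:Fin 3)) ∈ S' := by have := hjf _ hxi; rwa [hf2] at this
        have hxeq : x = (x.1, 1) := Prod.ext rfl h
        exact hcf _ hxS _ hfm (hxeq ▸ conf_12 x.1)
      · have hf1 : f x.1 = 1 := by rcases hf _ hxi with hh|hh; · exact hh
                                   · rw [h] at hfx; omega
        have hfm : (x.1, (1:Fin 3)) ∈ S' := by have := hjf _ hxi; rwa [hf1] at this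
        have hxeq : x = (x.1, 2) := Prod.ext rfl h
        exact hcf _ hxS _ hfm (hxeq ▸ conf_21 x.1)
end Proof2
section Proof3
variable {n : ℕ}
open Finset

lemma repair_d1 {M : Finset (Fin n × Fin 3)} (hrep : IsRepairC Finset.univ (ConfDn n) M)
    (i : Fin n) : (i,(1:Fin 3)) ∈ M ∨ (i,(2:Fin 3)) ∈ M := by
  obtain ⟨-, hcf, hmax⟩ := hrep
  by_contra hh
  push_neg at hh
  obtain ⟨h1, h2⟩ := hh
  refine hmax (insert (i,(2:Fin 3)) M) (Finset.ssubset_insert h2) (subset_univ _) ?_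
  refine cf_insert hcf ?_ ?_ (conf_irrefl _)
  · intro b hb hG; rw [conf2_left hG] at hb; exact h1 hb
  · intro b hb hG; rw [conf2_right hG] at hb; exact h1 hb

lemma repair_is_model {M : Finset (Fin n × Fin 3)} (hrep : IsRepairC Finset.univ (ConfDn n) M) :
    IsModel (DnD1 n ∪ DnD2 n) M := by
  have hcf := hrep.2.1
  have hmax := hrep.2.2
  intro d hd
  rcases mem_union.1 hd with hd | hd
  · simp only [DnD1, mem_image, mem_univ, true_and] at hd
    obtain ⟨i, rfl⟩ := hd
    rcases repair_d1 hrep i with h | h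
    · exact ⟨(i,1), by simp, h⟩
    · exact ⟨(i,2), by simp, h⟩
  · simp only [DnD2, mem_image, mem_univ, true_and] at hd
    obtain ⟨⟨i, b⟩, rfl⟩ := hd
    by_contra hcon
    push_neg at hcon
    simp only [mem_insert, mem_image, mem_erase, mem_univ, and_true] at hcon
    have h0 : (i,(0:Fin 3)) ∉ M := fun h => hcon _ (Or.inl rfl) h
    have h1 : (i,(1:Fin 3)) ∉ M := fun h => hcon _ (Or.inr (Or.inl rfl)) h
    have hz : ∀ z, z ≠ i → (z, if b z then (0:Fin 3) else 2) ∉ M := fun z hzi h =>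
      hcon _ (Or.inr (Or.inr ⟨z, hzi, rfl⟩)) h
    -- there must be some (j,0) ∈ M with j ≠ i, else insert (i,0) stays conflict-free
    have hj : ∃ j, j ≠ i ∧ (j,(0:Fin 3)) ∈ M := by
      by_contra hh
      push_neg at hh
      refine hmax (insert (i,(0:Fin 3)) M) (Finset.ssubset_insert h0) (subset_univ _) ?_
      refine cf_insert hcf ?_ ?_ (conf_irrefl _)
      · intro c hc hG
        rcases conf0_left hG with rfl | ⟨hc2, hc1⟩
        · exact h1 hc
        · have : c = (c.1, (0:Fin 3)) := Prod.ext rfl hc2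
          exact hh c.1 hc1 (this ▸ hc)
      · intro c hc hG
        rcases conf0_right hG with rfl | ⟨hc2, hc1⟩
        · exact h1 hc
        · have : c = (c.1, (0:Fin 3)) := Prod.ext rfl hc2
          exact hh c.1 hc1 (this ▸ hc)
    obtain ⟨j, hji, hj0⟩ := hj
    have hbj : b j = false := by
      by_contra hh
      rw [Bool.not_eq_false] at hh
      have := hz j hji
      rw [hh] at this
      exact this hj0
    have hj2 : (j,(2:Fin 3)) ∉ M := by
      have := hz j hji
      rwa [hbj] at this
    have hj1 : (j,(1:Fin 3)) ∉ M := fun h => hcf _ hj0 _ h (conf_01 j)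
    rcases repair_d1 hrep j with h | h
    · exact hj1 h
    · exact hj2 h

lemma model_contains_repB {M : Finset (Fin n × Fin 3)} (hM : IsModel (DnD1 n ∪ DnD2 n) M)
    {z : Fin n} (h0 : (z,(0:Fin 3)) ∈ M) (h2 : (z,(2:Fin 3)) ∈ M) :
    ∃ R, IsRepairC Finset.univ (ConfDn n) R ∧ R ⊆ M := by
  classical
  set f : Fin n → Fin 3 := fun j => if (j,(1:Fin 3)) ∈ M then 1 else 2 with hfdef
  have hf : ∀ j, j ≠ z → f j = 1 ∨ f j = 2 := by
    intro j _
    by_cases h : (j,(1:Fin 3)) ∈ M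
    · exact Or.inl (by simp [hfdef, h])
    · exact Or.inr (by simp [hfdef, h])
  refine ⟨repB n z f, repB_repair hf, ?_⟩
  intro x hx
  rcases mem_repB.1 hx with rfl|rfl|⟨h1, hxe⟩
  · exact h0
  · exact h2
  · rw [hxe]
    by_cases h : (x.1,(1:Fin 3)) ∈ M
    · simpa [hfdef, h] using h
    · have := (model_d1 hM x.1).resolve_left h
      simpa [hfdef, h] using this

lemma model_contains_repair {M : Finset (Fin n × Fin 3)} (hM : IsModel (DnD1 n ∪ DnD2 n) M) :
    ∃ R, IsRepairC Finset.univ (ConfDn n) R ∧ R ⊆ M := by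
  classical
  by_cases hA : ∀ i, (i,(1:Fin 3)) ∈ M
  · refine ⟨repA n, repA_repair, ?_⟩
    intro x hx
    rw [mem_repA] at hx
    have : x = (x.1, (1:Fin 3)) := Prod.ext rfl hx
    rw [this]; exact hA x.1
  · push_neg at hA
    obtain ⟨i, hi1⟩ := hA
    have hi2 : (i,(2:Fin 3)) ∈ M := (model_d1 hM i).resolve_left hi1
    by_cases hz : ∃ z, (z,(0:Fin 3)) ∈ M ∧ (z,(2:Fin 3)) ∈ M
    · obtain ⟨z, hz0, hz2⟩ := hz
      exact model_contains_repB hM hz0 hz2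
    · push_neg at hz
      set b : Fin n → Bool := fun w => decide ((w,(0:Fin 3)) ∉ M) with hbdef
      have hi0 : (i,(0:Fin 3)) ∈ M := by
        rcases model_d2 hM i b with h | h | ⟨w, hwi, hw⟩
        · exact h
        · exact absurd h hi1
        · exfalso
          by_cases hw0 : (w,(0:Fin 3)) ∈ M
          · have hb : b w = false := by simp [hbdef, hw0]
            rw [hb] at hw
            simp only [if_neg Bool.false_ne_true] at hw
            exact hz w hw0 hw
          · have hb : b w = true := by simp [hbdef, hw0]
            rw [hb] at hw
            simp only [if_pos rfl] at hw
            exact hw0 hw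
      exact model_contains_repB hM hi0 hi2
end Proof3

theorem stmt13 (n : ℕ) :
    ∀ M : Finset (Fin n × Fin 3),
      IsMinModel (DnD1 n ∪ DnD2 n) M ↔ IsRepairC Finset.univ (ConfDn n) M := by
  intro M
  constructor
  · rintro ⟨hm, hmin⟩
    obtain ⟨R, hR, hsub⟩ := model_contains_repair hm
    have hRM : R = M := by
      by_contra hne
      exact hmin R (lt_of_le_of_ne hsub hne) (repair_is_model hR)
    exact hRM ▸ hR
  · intro hrep
    refine ⟨repair_is_model hrep, ?_⟩
    intro M' hlt hM'
    obtain ⟨R, hR, hsub⟩ := model_contains_repair hM'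
    exact hR.2.2 M (lt_of_le_of_lt hsub hlt) (Finset.subset_univ _) hrep.2.1
end
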